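/- Let I, J ≥ 2 and let F be a finset of Fin I × Fin J with card F = I + J − 1. Then the family of model rows {r(p) : p ∈ F} is linearly independent over ℝ (i.e., F is a saturated fraction) if and only if no subset C ⊆ F is a k-cycle for any k ≥ 2. -/

import Mathlib

/-- A `k`-cycle in the `I × J` design: a set of `2k` points such that exactly `k`
row levels occur as first coordinates, each in exactly two points, and exactly `k`
column levels occur as second coordinates, each in exactly two points. -/
def IsKCycle {I J : ℕ} (k : ℕ) (C : Finset (Fin I × Fin J)) : Prop :=
  C.card = 2 * k ∧
  (C.image Prod.fst).card = k ∧
  (∀ i ∈ C.image Prod.fst, (C.filter fun p => p.1 = i).card = 2) ∧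
  (C.image Prod.snd).card = k ∧
  (∀ j ∈ C.image Prod.snd, (C.filter fun p => p.2 = j).card = 2)

/-- The model row of a design point `(i, j)` under the simple effect model:
a `1` (for the grand mean), the indicators of the first `I - 1` row levels,
and the indicators of the first `J - 1` column levels. -/
def modelRow {I J : ℕ} (p : Fin I × Fin J) :
    ℝ × (Fin (I - 1) → ℝ) × (Fin (J - 1) → ℝ) :=
  (1,
   fun a => if (p.1 : ℕ) = (a : ℕ) then 1 else 0,
   fun b => if (p.2 : ℕ) = (b : ℕ) then 1 else 0)


open Finset

variable {I J : ℕ}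



/-- On a set with at least as many points as occurring rows plus occurring columns,
there is a nonzero function with all row sums and column sums zero. -/
lemma existsBalanced (S : Finset (Fin I × Fin J)) (hne : S.Nonempty)
    (hc : (S.image Prod.fst).card + (S.image Prod.snd).card ≤ S.card) :
    ∃ c : Fin I × Fin J → ℝ, c ≠ 0 ∧ (∀ p, p ∉ S → c p = 0) ∧
      (∀ i, ∑ p ∈ S.filter (fun p => p.1 = i), c p = 0) ∧
      (∀ j, ∑ p ∈ S.filter (fun p => p.2 = j), c p = 0) := by
  classical
  set R := S.image Prod.fst with hR
  set Co := S.image Prod.snd with hCo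
  -- the linear map sending c to its row sums and column sums
  set T : (↥S → ℝ) →ₗ[ℝ] (↥R → ℝ) × (↥Co → ℝ) :=
    { toFun := fun c => (fun i => ∑ p : ↥S, if (p : Fin I × Fin J).1 = ↑i then c p else 0,
                         fun j => ∑ p : ↥S, if (p : Fin I × Fin J).2 = ↑j then c p else 0)
      map_add' := by
        intro x y
        refine Prod.ext ?_ ?_ <;> funext a <;>
          simp only [Prod.fst_add, Prod.snd_add, Pi.add_apply] <;>
          rw [← Finset.sum_add_distrib] <;>
          exact Finset.sum_congr rfl fun p _ => by split <;> simp
      map_smul' := by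
        intro m x
        refine Prod.ext ?_ ?_ <;> funext a <;>
          simp only [Prod.smul_fst, Prod.smul_snd, Pi.smul_apply, RingHom.id_apply,
            smul_eq_mul] <;>
          rw [Finset.mul_sum] <;>
          exact Finset.sum_congr rfl fun p _ => by split <;> simp } with hT
  -- the functional: total from rows minus total from columns
  set φ : ((↥R → ℝ) × (↥Co → ℝ)) →ₗ[ℝ] ℝ :=
    { toFun := fun uv => (∑ i, uv.1 i) - (∑ j, uv.2 j)
      map_add' := by intro x y; simp [Finset.sum_add_distrib]; ring
      map_smul' := by intro m x; simp [Finset.mul_sum, mul_sub] } with hφ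
  have key : ∀ (c : ↥S → ℝ) {α : Type} [DecidableEq α] (f : Fin I × Fin J → α) (W : Finset α),
      (∀ p : ↥S, f (p : Fin I × Fin J) ∈ W) →
      (∑ w : ↥W, ∑ p : ↥S, if f (p : Fin I × Fin J) = ↑w then c p else 0) = ∑ p : ↥S, c p := by
    intro c α _ f W hW
    rw [Finset.sum_comm]
    refine Finset.sum_congr rfl fun p _ => ?_
    rw [Finset.sum_eq_single (⟨f ↑p, hW p⟩ : ↥W)]
    · simp
    · intro b _ hb
      rw [if_neg]
      intro h
      exact hb (Subtype.ext h.symm)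
    · simp
  have hrange : LinearMap.range T ≤ LinearMap.ker φ := by
    rintro _ ⟨c, rfl⟩
    simp only [LinearMap.mem_ker, hφ, hT, LinearMap.coe_mk, AddHom.coe_mk]
    change (∑ w : ↥R, ∑ p : ↥S, if (p : Fin I × Fin J).1 = ↑w then c p else 0) -
      (∑ w : ↥Co, ∑ p : ↥S, if (p : Fin I × Fin J).2 = ↑w then c p else 0) = 0
    rw [key c Prod.fst R (fun p => Finset.mem_image_of_mem _ p.2),
        key c Prod.snd Co (fun p => Finset.mem_image_of_mem _ p.2), sub_self]
  -- φ is surjective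
  obtain ⟨i₀, hi₀⟩ := hne
  have hRmem : i₀.1 ∈ R := Finset.mem_image_of_mem _ hi₀
  have hφsurj : Function.Surjective φ := by
    intro r
    refine ⟨((fun _ => r / R.card), 0), ?_⟩
    have hRcard : (0:ℝ) < R.card := by
      have : 0 < R.card := Finset.card_pos.mpr ⟨_, hRmem⟩
      exact_mod_cast this
    change (∑ _i : ↥R, r / R.card) - (∑ _j : ↥Co, (0 : ℝ)) = r
    simp only [Finset.sum_const, nsmul_eq_mul, Pi.zero_apply]
    rw [Finset.card_univ, Fintype.card_coe, mul_zero, sub_zero, mul_comm,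
      div_mul_cancel₀ _ (ne_of_gt hRcard)]
  have hker : Module.finrank ℝ (LinearMap.ker φ) + 1 = R.card + Co.card := by
    have h1 := LinearMap.finrank_range_add_finrank_ker φ
    rw [LinearMap.range_eq_top.mpr hφsurj] at h1
    have : Module.finrank ℝ ((↥R → ℝ) × (↥Co → ℝ)) = R.card + Co.card := by
      simp [Module.finrank_prod, Module.finrank_fintype_fun_eq_card, Fintype.card_coe]
    rw [this] at h1
    simp only [finrank_top] at h1
    have h2 : Module.finrank ℝ ℝ = 1 := Module.finrank_self ℝ
    omega
  have hrankT := LinearMap.finrank_range_add_finrank_ker T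
  have hdom : Module.finrank ℝ (↥S → ℝ) = S.card := by
    simp [Module.finrank_fintype_fun_eq_card, Fintype.card_coe]
  have hle : Module.finrank ℝ (LinearMap.range T) ≤ Module.finrank ℝ (LinearMap.ker φ) :=
    Submodule.finrank_mono hrange
  have hkerT : 0 < Module.finrank ℝ (LinearMap.ker T) := by
    rw [hdom] at hrankT
    omega
  obtain ⟨c₀, hc₀mem, hc₀ne⟩ : ∃ x ∈ LinearMap.ker T, x ≠ 0 := by
    rw [← Submodule.ne_bot_iff]
    intro h
    rw [h] at hkerT
    simp [finrank_bot] at hkerT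
  -- extend c₀ by zero
  refine ⟨fun p => if h : p ∈ S then c₀ ⟨p, h⟩ else 0, ?_, ?_, ?_, ?_⟩
  · intro h
    apply hc₀ne
    funext p
    have := congrFun h ↑p
    simpa [p.2] using this
  · intro p hp; simp [hp]
  · intro i
    by_cases hi : i ∈ R
    · have h0 : (T c₀).1 ⟨i, hi⟩ = 0 := by rw [LinearMap.mem_ker.mp hc₀mem]; rfl
      calc ∑ p ∈ S.filter (fun p => p.1 = i), (if h : p ∈ S then c₀ ⟨p, h⟩ else 0)
          = ∑ p ∈ S, if p.1 = i then (if h : p ∈ S then c₀ ⟨p, h⟩ else 0) else 0 :=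
            Finset.sum_filter _ _
        _ = ∑ p ∈ S.attach, if (↑p : Fin I × Fin J).1 = i
              then (if h : ↑p ∈ S then c₀ ⟨↑p, h⟩ else 0) else 0 :=
            (Finset.sum_attach S _).symm
        _ = ∑ p ∈ S.attach, if (↑p : Fin I × Fin J).1 = i then c₀ p else 0 :=
            Finset.sum_congr rfl fun p _ => by simp [p.2]
        _ = (T c₀).1 ⟨i, hi⟩ := rfl
        _ = 0 := h0
    · apply Finset.sum_eq_zero
      intro p hp
      rw [Finset.mem_filter] at hp
      exact absurd (hp.2 ▸ Finset.mem_image_of_mem Prod.fst hp.1) hi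
  · intro j
    by_cases hj : j ∈ Co
    · have h0 : (T c₀).2 ⟨j, hj⟩ = 0 := by rw [LinearMap.mem_ker.mp hc₀mem]; rfl
      calc ∑ p ∈ S.filter (fun p => p.2 = j), (if h : p ∈ S then c₀ ⟨p, h⟩ else 0)
          = ∑ p ∈ S, if p.2 = j then (if h : p ∈ S then c₀ ⟨p, h⟩ else 0) else 0 :=
            Finset.sum_filter _ _
        _ = ∑ p ∈ S.attach, if (↑p : Fin I × Fin J).2 = j
              then (if h : ↑p ∈ S then c₀ ⟨↑p, h⟩ else 0) else 0 :=
            (Finset.sum_attach S _).symm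
        _ = ∑ p ∈ S.attach, if (↑p : Fin I × Fin J).2 = j then c₀ p else 0 :=
            Finset.sum_congr rfl fun p _ => by simp [p.2]
        _ = (T c₀).2 ⟨j, hj⟩ := rfl
        _ = 0 := h0
    · apply Finset.sum_eq_zero
      intro p hp
      rw [Finset.mem_filter] at hp
      exact absurd (hp.2 ▸ Finset.mem_image_of_mem Prod.snd hp.1) hj



lemma exists_twoRegular : ∀ (n : ℕ) (S : Finset (Fin I × Fin J)), S.card = n → S.Nonempty →
    (S.image Prod.fst).card + (S.image Prod.snd).card ≤ S.card →
    ∃ C ⊆ S, C.Nonempty ∧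
      (∀ i ∈ C.image Prod.fst, (C.filter fun p => p.1 = i).card = 2) ∧
      (∀ j ∈ C.image Prod.snd, (C.filter fun p => p.2 = j).card = 2) := by
  intro n
  induction n using Nat.strong_induction_on with
  | _ n IH =>
  intro S hn hne hcard
  classical
  set R := S.image Prod.fst with hR
  set Co := S.image Prod.snd with hCo
  have hRpos : 0 < R.card := Finset.card_pos.mpr (hne.image _)
  have hCopos : 0 < Co.card := Finset.card_pos.mpr (hne.image _)
  have hSfib : S.card = ∑ i ∈ R, (S.filter fun p => p.1 = i).card :=
    Finset.card_eq_sum_card_fiberwise fun x hx => Finset.mem_image_of_mem _ hx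
  have hSfib' : S.card = ∑ j ∈ Co, (S.filter fun p => p.2 = j).card :=
    Finset.card_eq_sum_card_fiberwise fun x hx => Finset.mem_image_of_mem _ hx
  have hfibpos : ∀ i ∈ R, 0 < (S.filter fun p => p.1 = i).card := by
    intro i hi
    obtain ⟨p, hp, hpi⟩ := Finset.mem_image.mp hi
    exact Finset.card_pos.mpr ⟨p, Finset.mem_filter.mpr ⟨hp, hpi⟩⟩
  have hfibpos' : ∀ j ∈ Co, 0 < (S.filter fun p => p.2 = j).card := by
    intro j hj
    obtain ⟨p, hp, hpj⟩ := Finset.mem_image.mp hj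
    exact Finset.card_pos.mpr ⟨p, Finset.mem_filter.mpr ⟨hp, hpj⟩⟩
  -- helper for the recursive step: removing one point keeping the inequality
  have step : ∀ p ∈ S,
      ((S.erase p).image Prod.fst).card + ((S.erase p).image Prod.snd).card ≤ (S.erase p).card →
      2 ≤ S.card →
      ∃ C ⊆ S, C.Nonempty ∧
        (∀ i ∈ C.image Prod.fst, (C.filter fun q => q.1 = i).card = 2) ∧
        (∀ j ∈ C.image Prod.snd, (C.filter fun q => q.2 = j).card = 2) := by
    intro p hp hineq h2
    have hlt : (S.erase p).card < n := by
      rw [← hn]; exact Finset.card_lt_card (Finset.erase_ssubset hp)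
    have hne' : (S.erase p).Nonempty := by
      rw [← Finset.card_pos, Finset.card_erase_of_mem hp]
      omega
    obtain ⟨C, hCsub, hCne, hCrow, hCcol⟩ :=
      IH _ hlt (S.erase p) rfl hne' hineq
    exact ⟨C, hCsub.trans (Finset.erase_subset _ _), hCne, hCrow, hCcol⟩
  by_cases hdeg1 : (∃ i ∈ R, (S.filter fun p => p.1 = i).card = 1) ∨
      (∃ j ∈ Co, (S.filter fun p => p.2 = j).card = 1)
  · -- a degree-one row or column: remove its point
    have h2 : 2 ≤ S.card := by omega
    rcases hdeg1 with ⟨i, hi, hfib⟩ | ⟨j, hj, hfib⟩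
    · obtain ⟨p, hpeq⟩ := Finset.card_eq_one.mp hfib
      have hpS : p ∈ S ∧ p.1 = i := by
        have : p ∈ S.filter fun q => q.1 = i := hpeq ▸ Finset.mem_singleton_self p
        exact Finset.mem_filter.mp this
      refine step p hpS.1 ?_ h2
      have h1 : (S.erase p).image Prod.fst ⊆ R.erase i := by
        intro a ha
        obtain ⟨q, hq, hqa⟩ := Finset.mem_image.mp ha
        have hqS := Finset.mem_of_mem_erase hq
        refine Finset.mem_erase.mpr ⟨?_, hqa ▸ Finset.mem_image_of_mem _ hqS⟩
        intro hai
        have : q ∈ S.filter fun r => r.1 = i := Finset.mem_filter.mpr ⟨hqS, hai ▸ hqa⟩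
        rw [hpeq, Finset.mem_singleton] at this
        exact (Finset.mem_erase.mp hq).1 this
      have h2' : (S.erase p).image Prod.snd ⊆ Co := by
        intro b hb
        obtain ⟨q, hq, hqb⟩ := Finset.mem_image.mp hb
        exact hqb ▸ Finset.mem_image_of_mem _ (Finset.mem_of_mem_erase hq)
      have c1 : ((S.erase p).image Prod.fst).card ≤ R.card - 1 := by
        have := Finset.card_le_card h1
        rwa [Finset.card_erase_of_mem hi] at this
      have c2 : ((S.erase p).image Prod.snd).card ≤ Co.card := Finset.card_le_card h2'
      rw [Finset.card_erase_of_mem hpS.1]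
      omega
    · obtain ⟨p, hpeq⟩ := Finset.card_eq_one.mp hfib
      have hpS : p ∈ S ∧ p.2 = j := by
        have : p ∈ S.filter fun q => q.2 = j := hpeq ▸ Finset.mem_singleton_self p
        exact Finset.mem_filter.mp this
      refine step p hpS.1 ?_ h2
      have h1 : (S.erase p).image Prod.snd ⊆ Co.erase j := by
        intro a ha
        obtain ⟨q, hq, hqa⟩ := Finset.mem_image.mp ha
        have hqS := Finset.mem_of_mem_erase hq
        refine Finset.mem_erase.mpr ⟨?_, hqa ▸ Finset.mem_image_of_mem _ hqS⟩
        intro hai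
        have : q ∈ S.filter fun r => r.2 = j := Finset.mem_filter.mpr ⟨hqS, hai ▸ hqa⟩
        rw [hpeq, Finset.mem_singleton] at this
        exact (Finset.mem_erase.mp hq).1 this
      have h2' : (S.erase p).image Prod.fst ⊆ R := by
        intro b hb
        obtain ⟨q, hq, hqb⟩ := Finset.mem_image.mp hb
        exact hqb ▸ Finset.mem_image_of_mem _ (Finset.mem_of_mem_erase hq)
      have c1 : ((S.erase p).image Prod.snd).card ≤ Co.card - 1 := by
        have := Finset.card_le_card h1
        rwa [Finset.card_erase_of_mem hj] at this
      have c2 : ((S.erase p).image Prod.fst).card ≤ R.card := Finset.card_le_card h2'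
      rw [Finset.card_erase_of_mem hpS.1]
      omega
  · -- every occurring row and column has degree ≥ 2
    push_neg at hdeg1
    obtain ⟨hrow2, hcol2⟩ := hdeg1
    have hrow2' : ∀ i ∈ R, 2 ≤ (S.filter fun p => p.1 = i).card := by
      intro i hi
      have := hfibpos i hi
      have := hrow2 i hi
      omega
    have hcol2' : ∀ j ∈ Co, 2 ≤ (S.filter fun p => p.2 = j).card := by
      intro j hj
      have := hfibpos' j hj
      have := hcol2 j hj
      omega
    by_cases hall : (∀ i ∈ R, (S.filter fun p => p.1 = i).card = 2) ∧
        (∀ j ∈ Co, (S.filter fun p => p.2 = j).card = 2)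
    · exact ⟨S, Finset.Subset.refl S, hne, hall.1, hall.2⟩
    · -- some degree ≥ 3 : then card S ≥ R + Co + 1, erase any point
      have hbig : R.card + Co.card + 1 ≤ S.card := by
        have hub : 2 * R.card ≤ S.card := by
          rw [hSfib, two_mul]
          calc R.card + R.card = ∑ _i ∈ R, 2 := by rw [Finset.sum_const, smul_eq_mul]; ring
            _ ≤ _ := Finset.sum_le_sum hrow2'
        have hub' : 2 * Co.card ≤ S.card := by
          rw [hSfib', two_mul]
          calc Co.card + Co.card = ∑ _j ∈ Co, 2 := by rw [Finset.sum_const, smul_eq_mul]; ring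
            _ ≤ _ := Finset.sum_le_sum hcol2'
        -- one of the sums is strict
        rw [not_and_or] at hall
        rcases hall with hall | hall
        · push_neg at hall
          obtain ⟨i, hi, hine⟩ := hall
          have h3 : 3 ≤ (S.filter fun p => p.1 = i).card := by
            have := hrow2' i hi; omega
          have : 2 * R.card < S.card := by
            rw [hSfib, two_mul]
            calc R.card + R.card = ∑ _i ∈ R, 2 := by rw [Finset.sum_const, smul_eq_mul]; ring
              _ < _ := Finset.sum_lt_sum hrow2' ⟨i, hi, by omega⟩
          omega
        · push_neg at hall
          obtain ⟨j, hj, hjne⟩ := hall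
          have h3 : 3 ≤ (S.filter fun p => p.2 = j).card := by
            have := hcol2' j hj; omega
          have : 2 * Co.card < S.card := by
            rw [hSfib', two_mul]
            calc Co.card + Co.card = ∑ _j ∈ Co, 2 := by rw [Finset.sum_const, smul_eq_mul]; ring
              _ < _ := Finset.sum_lt_sum hcol2' ⟨j, hj, by omega⟩
          omega
      obtain ⟨p, hp⟩ := hne
      refine step p hp ?_ (by omega)
      have c1 : ((S.erase p).image Prod.fst).card ≤ R.card :=
        Finset.card_le_card (Finset.image_subset_image (Finset.erase_subset _ _))
      have c2 : ((S.erase p).image Prod.snd).card ≤ Co.card :=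
        Finset.card_le_card (Finset.image_subset_image (Finset.erase_subset _ _))
      rw [Finset.card_erase_of_mem hp]
      omega

/-- packaging: an exactly 2-regular nonempty set is a `k`-cycle for some `k ≥ 2`. -/
lemma twoRegular_isKCycle (C : Finset (Fin I × Fin J)) (hne : C.Nonempty)
    (hrow : ∀ i ∈ C.image Prod.fst, (C.filter fun p => p.1 = i).card = 2)
    (hcol : ∀ j ∈ C.image Prod.snd, (C.filter fun p => p.2 = j).card = 2) :
    ∃ k, 2 ≤ k ∧ (C.card = 2 * k ∧
      (C.image Prod.fst).card = k ∧
      (∀ i ∈ C.image Prod.fst, (C.filter fun p => p.1 = i).card = 2) ∧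
      (C.image Prod.snd).card = k ∧
      (∀ j ∈ C.image Prod.snd, (C.filter fun p => p.2 = j).card = 2)) := by
  classical
  set k := (C.image Prod.fst).card with hk
  have hfib : C.card = ∑ i ∈ C.image Prod.fst, (C.filter fun p => p.1 = i).card :=
    Finset.card_eq_sum_card_fiberwise fun x hx => Finset.mem_image_of_mem _ hx
  have hfib' : C.card = ∑ j ∈ C.image Prod.snd, (C.filter fun p => p.2 = j).card :=
    Finset.card_eq_sum_card_fiberwise fun x hx => Finset.mem_image_of_mem _ hx
  have hCk : C.card = 2 * k := by
    rw [hfib, Finset.sum_congr rfl hrow, Finset.sum_const, smul_eq_mul, hk, mul_comm]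
  have hCk' : C.card = 2 * (C.image Prod.snd).card := by
    rw [hfib', Finset.sum_congr rfl hcol, Finset.sum_const, smul_eq_mul, mul_comm]
  have hsnd : (C.image Prod.snd).card = k := by omega
  have hk2 : 2 ≤ k := by
    rcases Nat.lt_or_ge k 2 with h | h
    · exfalso
      have hk1 : 1 ≤ k := Finset.card_pos.mpr (hne.image _)
      have hkeq : k = 1 := by omega
      have hC2 : C.card = 2 := by omega
      obtain ⟨p, q, hpq, hCpq⟩ := Finset.card_eq_two.mp hC2
      have h1 : p.1 = q.1 := by
        have hp1 : p.1 ∈ C.image Prod.fst :=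
          Finset.mem_image_of_mem _ (hCpq ▸ Finset.mem_insert_self p {q})
        have hq1 : q.1 ∈ C.image Prod.fst := by
          refine Finset.mem_image_of_mem _ ?_
          rw [hCpq]; exact Finset.mem_insert_of_mem (Finset.mem_singleton_self q)
        have := Finset.card_le_one.mp (le_of_eq (hk.symm.trans hkeq)) _ hp1 _ hq1
        exact this
      have h2 : p.2 = q.2 := by
        have hp1 : p.2 ∈ C.image Prod.snd :=
          Finset.mem_image_of_mem _ (hCpq ▸ Finset.mem_insert_self p {q})
        have hq1 : q.2 ∈ C.image Prod.snd := by
          refine Finset.mem_image_of_mem _ ?_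
          rw [hCpq]; exact Finset.mem_insert_of_mem (Finset.mem_singleton_self q)
        have hsnd1 : (C.image Prod.snd).card ≤ 1 := by omega
        exact Finset.card_le_one.mp hsnd1 _ hp1 _ hq1
      exact hpq (Prod.ext h1 h2)
    · exact h
  exact ⟨k, hk2, hCk, rfl, hrow, hsnd, hcol⟩
lemma sum_model (F : Finset (Fin I × Fin J)) (c : Fin I × Fin J → ℝ) :
    ∑ p ∈ F.attach, c ↑p • modelRow (↑p : Fin I × Fin J) =
      (∑ p ∈ F, c p,
       fun a : Fin (I-1) =>
         ∑ p ∈ F.filter (fun p => p.1 = Fin.castLE (Nat.sub_le I 1) a), c p,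
       fun b : Fin (J-1) =>
         ∑ p ∈ F.filter (fun p => p.2 = Fin.castLE (Nat.sub_le J 1) b), c p) := by
  classical
  refine Prod.ext ?_ (Prod.ext ?_ ?_)
  · rw [Prod.fst_sum]
    rw [← Finset.sum_attach F c]
    exact Finset.sum_congr rfl fun p _ => by simp [modelRow]
  · funext a
    calc (∑ p ∈ F.attach, c ↑p • modelRow (↑p : Fin I × Fin J)).2.1 a
        = ∑ p ∈ F.attach,
            c ↑p * (if ((↑p : Fin I × Fin J).1 : ℕ) = (a : ℕ) then 1 else 0) := by
          rw [Prod.snd_sum, Prod.fst_sum, Finset.sum_apply]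
          exact Finset.sum_congr rfl fun p _ => rfl
      _ = ∑ p ∈ F, (if ((p.1 : ℕ) = (a : ℕ)) then c p else 0) := by
          rw [← Finset.sum_attach F (fun p => if (p.1 : ℕ) = (a : ℕ) then c p else 0)]
          exact Finset.sum_congr rfl fun p _ => by split <;> simp
      _ = ∑ p ∈ F.filter (fun p => (p.1 : ℕ) = (a : ℕ)), c p := (Finset.sum_filter _ _).symm
      _ = ∑ p ∈ F.filter (fun p => p.1 = Fin.castLE (Nat.sub_le I 1) a), c p := by
          refine Finset.sum_congr ?_ (fun _ _ => rfl)
          refine Finset.filter_congr fun p _ => ?_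
          simp [Fin.ext_iff]
  · funext b
    calc (∑ p ∈ F.attach, c ↑p • modelRow (↑p : Fin I × Fin J)).2.2 b
        = ∑ p ∈ F.attach,
            c ↑p * (if ((↑p : Fin I × Fin J).2 : ℕ) = (b : ℕ) then 1 else 0) := by
          rw [Prod.snd_sum, Prod.snd_sum, Finset.sum_apply]
          exact Finset.sum_congr rfl fun p _ => rfl
      _ = ∑ p ∈ F, (if ((p.2 : ℕ) = (b : ℕ)) then c p else 0) := by
          rw [← Finset.sum_attach F (fun p => if (p.2 : ℕ) = (b : ℕ) then c p else 0)]
          exact Finset.sum_congr rfl fun p _ => by split <;> simp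
      _ = ∑ p ∈ F.filter (fun p => (p.2 : ℕ) = (b : ℕ)), c p := (Finset.sum_filter _ _).symm
      _ = ∑ p ∈ F.filter (fun p => p.2 = Fin.castLE (Nat.sub_le J 1) b), c p := by
          refine Finset.sum_congr ?_ (fun _ _ => rfl)
          refine Finset.filter_congr fun p _ => ?_
          simp [Fin.ext_iff]

/-- Linear dependence of the model rows is equivalent to the existence of a nonzero
function supported on `F` all of whose row sums and column sums vanish. -/
lemma dep_iff_balanced (F : Finset (Fin I × Fin J)) :
    ¬ LinearIndependent ℝ (fun p : F => modelRow p.1) ↔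
      ∃ c : Fin I × Fin J → ℝ, c ≠ 0 ∧ (∀ p, p ∉ F → c p = 0) ∧
        (∀ i, ∑ p ∈ F.filter (fun p => p.1 = i), c p = 0) ∧
        (∀ j, ∑ p ∈ F.filter (fun p => p.2 = j), c p = 0) := by
  classical
  rw [Fintype.not_linearIndependent_iff]
  constructor
  · rintro ⟨g, hsum, p₀, hp₀⟩
    set c : Fin I × Fin J → ℝ := fun p => if h : p ∈ F then g ⟨p, h⟩ else 0 with hc
    have hcg : ∀ p : ↥F, c ↑p = g p := fun p => by simp [hc, p.2]
    have hsum' : ∑ p ∈ F.attach, c ↑p • modelRow (↑p : Fin I × Fin J) = 0 := by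
      rw [← hsum, Finset.univ_eq_attach]
      exact Finset.sum_congr rfl fun p _ => by rw [hcg]
    rw [sum_model] at hsum'
    have h1 : ∑ p ∈ F, c p = 0 := congrArg Prod.fst hsum'
    have h2 : ∀ a : Fin (I-1),
        ∑ p ∈ F.filter (fun p => p.1 = Fin.castLE (Nat.sub_le I 1) a), c p = 0 :=
      fun a => congrFun (congrArg (Prod.fst ∘ Prod.snd) hsum') a
    have h3 : ∀ b : Fin (J-1),
        ∑ p ∈ F.filter (fun p => p.2 = Fin.castLE (Nat.sub_le J 1) b), c p = 0 :=
      fun b => congrFun (congrArg (Prod.snd ∘ Prod.snd) hsum') b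
    have hrowlt : ∀ i : Fin I, (i : ℕ) < I - 1 →
        ∑ p ∈ F.filter (fun p => p.1 = i), c p = 0 := by
      intro i hlt
      have := h2 ⟨(i : ℕ), hlt⟩
      convert this using 3
      simp [Fin.ext_iff]
    have hcollt : ∀ j : Fin J, (j : ℕ) < J - 1 →
        ∑ p ∈ F.filter (fun p => p.2 = j), c p = 0 := by
      intro j hlt
      have := h3 ⟨(j : ℕ), hlt⟩
      convert this using 3
      simp [Fin.ext_iff]
    refine ⟨c, ?_, ?_, ?_, ?_⟩
    · intro h
      apply hp₀
      rw [← hcg p₀, h]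
      rfl
    · intro p hp; simp [hc, hp]
    · intro i
      by_cases hlt : (i : ℕ) < I - 1
      · exact hrowlt i hlt
      · have hfib : ∑ i' : Fin I, ∑ p ∈ F.filter (fun p => p.1 = i'), c p = ∑ p ∈ F, c p :=
          Finset.sum_fiberwise F Prod.fst c
        rw [h1, Finset.sum_eq_single i] at hfib
        · exact hfib
        · intro b _ hbne
          refine hrowlt b ?_
          have hb : (b : ℕ) < I := b.2
          have hi : (i : ℕ) < I := i.2
          have : (b : ℕ) ≠ (i : ℕ) := fun h => hbne (Fin.ext h)
          omega
        · intro h; exact absurd (Finset.mem_univ i) h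
    · intro j
      by_cases hlt : (j : ℕ) < J - 1
      · exact hcollt j hlt
      · have hfib : ∑ j' : Fin J, ∑ p ∈ F.filter (fun p => p.2 = j'), c p = ∑ p ∈ F, c p :=
          Finset.sum_fiberwise F Prod.snd c
        rw [h1, Finset.sum_eq_single j] at hfib
        · exact hfib
        · intro b _ hbne
          refine hcollt b ?_
          have hb : (b : ℕ) < J := b.2
          have hj : (j : ℕ) < J := j.2
          have : (b : ℕ) ≠ (j : ℕ) := fun h => hbne (Fin.ext h)
          omega
        · intro h; exact absurd (Finset.mem_univ j) h
  · rintro ⟨c, hcne, hcsupp, hrow, hcol⟩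
    refine ⟨fun p => c ↑p, ?_, ?_⟩
    · rw [Finset.univ_eq_attach, sum_model]
      have h1 : ∑ p ∈ F, c p = 0 := by
        rw [← Finset.sum_fiberwise F Prod.fst c]
        exact Finset.sum_eq_zero fun i _ => hrow i
      refine Prod.ext h1 (Prod.ext ?_ ?_)
      · funext a; exact hrow _
      · funext b; exact hcol _
    · obtain ⟨q, hq⟩ := Function.ne_iff.mp hcne
      have hqF : q ∈ F := by
        by_contra h
        exact hq (hcsupp q h)
      exact ⟨⟨q, hqF⟩, hq⟩

theorem saturated_iff_no_cycle {I J : ℕ} (hI : 2 ≤ I) (hJ : 2 ≤ J)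
    (F : Finset (Fin I × Fin J)) (hcard : F.card = I + J - 1) :
    LinearIndependent ℝ (fun p : F => modelRow p.1) ↔
      ¬ ∃ k, 2 ≤ k ∧ ∃ C ⊆ F, IsKCycle k C := by
  classical
  constructor
  · intro hli
    rintro ⟨k, hk2, C, hCF, hC⟩
    obtain ⟨hCcard, hCr, hCrow, hCc, hCcol⟩ := hC
    have hCne : C.Nonempty := by
      rw [← Finset.card_pos, hCcard]; omega
    have hineq : (C.image Prod.fst).card + (C.image Prod.snd).card ≤ C.card := by
      rw [hCr, hCc, hCcard]; omega
    obtain ⟨c, hcne, hcsupp, hrow, hcol⟩ := existsBalanced C hCne hineq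
    have hrowF : ∀ i, ∑ p ∈ F.filter (fun p => p.1 = i), c p = 0 := by
      intro i
      rw [← hrow i]
      exact (Finset.sum_subset (Finset.filter_subset_filter _ hCF)
        (fun x hxF hxC => hcsupp x (fun hxCC =>
          hxC (Finset.mem_filter.mpr ⟨hxCC, (Finset.mem_filter.mp hxF).2⟩)))).symm
    have hcolF : ∀ j, ∑ p ∈ F.filter (fun p => p.2 = j), c p = 0 := by
      intro j
      rw [← hcol j]
      exact (Finset.sum_subset (Finset.filter_subset_filter _ hCF)
        (fun x hxF hxC => hcsupp x (fun hxCC =>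
          hxC (Finset.mem_filter.mpr ⟨hxCC, (Finset.mem_filter.mp hxF).2⟩)))).symm
    exact (dep_iff_balanced F).mpr
      ⟨c, hcne, fun p hp => hcsupp p (fun hpC => hp (hCF hpC)), hrowF, hcolF⟩ hli
  · intro hnc
    by_contra hli
    obtain ⟨c, hcne, hcsupp, hrow, hcol⟩ := (dep_iff_balanced F).mp hli
    set S := F.filter (fun p => c p ≠ 0) with hS
    have hSsub : S ⊆ F := Finset.filter_subset _ _
    have hSne : S.Nonempty := by
      obtain ⟨q, hq⟩ := Function.ne_iff.mp hcne
      have hqF : q ∈ F := by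
        by_contra h
        exact hq (hcsupp q h)
      exact ⟨q, Finset.mem_filter.mpr ⟨hqF, hq⟩⟩
    have hsum_eq : ∀ i, ∑ p ∈ S.filter (fun p => p.1 = i), c p
        = ∑ p ∈ F.filter (fun p => p.1 = i), c p := by
      intro i
      refine Finset.sum_subset (Finset.filter_subset_filter _ hSsub) ?_
      intro x hxF hxS
      by_contra h
      exact hxS (Finset.mem_filter.mpr
        ⟨Finset.mem_filter.mpr ⟨(Finset.mem_filter.mp hxF).1, h⟩,
         (Finset.mem_filter.mp hxF).2⟩)
    have hsum_eq' : ∀ j, ∑ p ∈ S.filter (fun p => p.2 = j), c p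
        = ∑ p ∈ F.filter (fun p => p.2 = j), c p := by
      intro j
      refine Finset.sum_subset (Finset.filter_subset_filter _ hSsub) ?_
      intro x hxF hxS
      by_contra h
      exact hxS (Finset.mem_filter.mpr
        ⟨Finset.mem_filter.mpr ⟨(Finset.mem_filter.mp hxF).1, h⟩,
         (Finset.mem_filter.mp hxF).2⟩)
    have hrow2 : ∀ i ∈ S.image Prod.fst, 2 ≤ (S.filter fun p => p.1 = i).card := by
      intro i hi
      obtain ⟨p, hpS, hpi⟩ := Finset.mem_image.mp hi
      have hpos : 0 < (S.filter fun p => p.1 = i).card :=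
        Finset.card_pos.mpr ⟨p, Finset.mem_filter.mpr ⟨hpS, hpi⟩⟩
      rcases Nat.lt_or_ge (S.filter fun p => p.1 = i).card 2 with h | h
      · exfalso
        have h1 : (S.filter fun p => p.1 = i).card = 1 := by omega
        obtain ⟨q, hqeq⟩ := Finset.card_eq_one.mp h1
        have hsum : ∑ p ∈ S.filter (fun p => p.1 = i), c p = c q := by
          rw [hqeq, Finset.sum_singleton]
        rw [hsum_eq i, hrow i] at hsum
        have hqS : q ∈ S.filter fun p => p.1 = i := hqeq ▸ Finset.mem_singleton_self q
        have hqne := (Finset.mem_filter.mp (Finset.mem_filter.mp hqS).1).2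
        exact hqne hsum.symm
      · exact h
    have hcol2 : ∀ j ∈ S.image Prod.snd, 2 ≤ (S.filter fun p => p.2 = j).card := by
      intro j hj
      obtain ⟨p, hpS, hpj⟩ := Finset.mem_image.mp hj
      have hpos : 0 < (S.filter fun p => p.2 = j).card :=
        Finset.card_pos.mpr ⟨p, Finset.mem_filter.mpr ⟨hpS, hpj⟩⟩
      rcases Nat.lt_or_ge (S.filter fun p => p.2 = j).card 2 with h | h
      · exfalso
        have h1 : (S.filter fun p => p.2 = j).card = 1 := by omega
        obtain ⟨q, hqeq⟩ := Finset.card_eq_one.mp h1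
        have hsum : ∑ p ∈ S.filter (fun p => p.2 = j), c p = c q := by
          rw [hqeq, Finset.sum_singleton]
        rw [hsum_eq' j, hcol j] at hsum
        have hqS : q ∈ S.filter fun p => p.2 = j := hqeq ▸ Finset.mem_singleton_self q
        have hqne := (Finset.mem_filter.mp (Finset.mem_filter.mp hqS).1).2
        exact hqne hsum.symm
      · exact h
    have hineq : (S.image Prod.fst).card + (S.image Prod.snd).card ≤ S.card := by
      have hfib : S.card = ∑ i ∈ S.image Prod.fst, (S.filter fun p => p.1 = i).card :=
        Finset.card_eq_sum_card_fiberwise fun x hx => Finset.mem_image_of_mem _ hx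
      have hfib' : S.card = ∑ j ∈ S.image Prod.snd, (S.filter fun p => p.2 = j).card :=
        Finset.card_eq_sum_card_fiberwise fun x hx => Finset.mem_image_of_mem _ hx
      have hb1 : 2 * (S.image Prod.fst).card ≤ S.card := by
        rw [hfib, two_mul]
        calc (S.image Prod.fst).card + (S.image Prod.fst).card
            = ∑ _i ∈ S.image Prod.fst, 2 := by rw [Finset.sum_const, smul_eq_mul]; ring
          _ ≤ _ := Finset.sum_le_sum hrow2
      have hb2 : 2 * (S.image Prod.snd).card ≤ S.card := by
        rw [hfib', two_mul]
        calc (S.image Prod.snd).card + (S.image Prod.snd).card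
            = ∑ _j ∈ S.image Prod.snd, 2 := by rw [Finset.sum_const, smul_eq_mul]; ring
          _ ≤ _ := Finset.sum_le_sum hcol2
      omega
    obtain ⟨C, hCsub, hCne, hCrow, hCcol⟩ := exists_twoRegular S.card S rfl hSne hineq
    obtain ⟨k, hk2, hcy⟩ := twoRegular_isKCycle C hCne hCrow hCcol
    exact hnc ⟨k, hk2, C, hCsub.trans hSsub, hcy⟩
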